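/- arXiv:1708.02266 — 3 statements merged into one kernel-verified Lean document; each statement's English description precedes it below -/
import Mathlib

section
/- For all 0 < λ < 1 and all positive integers n and d, the tail of the negative binomial distribution with d failures and success probability λ satisfies P(W > n) ≤ 1 − (1 − λ^{n/d})^d; equivalently, ∑_{k=0}^{n} C(k+d−1, d−1) λ^k (1−λ)^d ≥ (1 − λ^{n/d})^d. -/
open Finset

lemma key_negbin (lam : ℝ) (h0 : 0 ≤ lam) (m e : ℕ) :
    (∑ j ∈ Finset.range (m+1), lam ^ j) ^ (e+1)
      ≤ ∑ k ∈ Finset.range ((e+1)*m + 1), ((k+e).choose e : ℝ) * lam ^ k := by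
  induction e with
  | zero => simp
  | succ e ih =>
    have hsum_nonneg : (0:ℝ) ≤ ∑ j ∈ range (m+1), lam ^ j :=
      sum_nonneg fun j _ => pow_nonneg h0 j
    have hmaps : ∀ p ∈ (range ((e+1)*m+1)) ×ˢ (range (m+1)),
        p.1 + p.2 ∈ range ((e+2)*m+1) := by
      intro p hp
      simp only [mem_product, mem_range] at hp ⊢
      have : (e+2)*m = (e+1)*m + m := by ring
      omega
    calc (∑ j ∈ range (m+1), lam^j)^(e+1+1)
        = (∑ j ∈ range (m+1), lam^j)^(e+1) * (∑ j ∈ range (m+1), lam^j) := by ring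
      _ ≤ (∑ k ∈ range ((e+1)*m+1), ((k+e).choose e : ℝ) * lam^k)
            * (∑ j ∈ range (m+1), lam^j) :=
          mul_le_mul_of_nonneg_right ih hsum_nonneg
      _ = ∑ p ∈ (range ((e+1)*m+1)) ×ˢ (range (m+1)),
            ((p.1+e).choose e : ℝ) * lam^(p.1+p.2) := by
          rw [Finset.sum_mul_sum]
          rw [Finset.sum_product]
          exact Finset.sum_congr rfl fun k _ => Finset.sum_congr rfl fun j _ => by
            rw [pow_add]; ring
      _ = ∑ t ∈ range ((e+2)*m+1), ∑ p ∈ ((range ((e+1)*m+1)) ×ˢ (range (m+1))).filter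
            (fun p => p.1+p.2 = t), ((p.1+e).choose e : ℝ) * lam^(p.1+p.2) :=
          (Finset.sum_fiberwise_of_maps_to hmaps _).symm
      _ ≤ ∑ t ∈ range ((e+2)*m+1), ((t+(e+1)).choose (e+1) : ℝ) * lam^t := by
          apply sum_le_sum
          intro t _
          have hre : ∀ p ∈ ((range ((e+1)*m+1)) ×ˢ (range (m+1))).filter
              (fun p => p.1+p.2 = t), ((p.1+e).choose e : ℝ) * lam^(p.1+p.2)
                = ((p.1+e).choose e : ℝ) * lam^t := by
            intro p hp
            simp only [mem_filter] at hp
            rw [hp.2]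
          rw [Finset.sum_congr rfl hre, ← Finset.sum_mul]
          apply mul_le_mul_of_nonneg_right _ (pow_nonneg h0 t)
          have hinj : ∀ p ∈ ((range ((e+1)*m+1)) ×ˢ (range (m+1))).filter
              (fun p => p.1+p.2 = t), ∀ q ∈ ((range ((e+1)*m+1)) ×ˢ (range (m+1))).filter
              (fun p => p.1+p.2 = t), p.1 = q.1 → p = q := by
            intro p hp q hq h1
            simp only [mem_filter] at hp hq
            have : p.2 = q.2 := by omega
            exact Prod.ext h1 this
          rw [← Finset.sum_image (g := Prod.fst) (f := fun k => ((k+e).choose e : ℝ)) hinj]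
          have hsub : (((range ((e+1)*m+1)) ×ˢ (range (m+1))).filter
              (fun p => p.1+p.2 = t)).image Prod.fst ⊆ range (t+1) := by
            intro k hk
            simp only [mem_image, mem_filter, mem_product, mem_range] at hk ⊢
            obtain ⟨p, hp, rfl⟩ := hk
            omega
          calc ∑ k ∈ (((range ((e+1)*m+1)) ×ˢ (range (m+1))).filter
                (fun p => p.1+p.2 = t)).image Prod.fst, ((k+e).choose e : ℝ)
              ≤ ∑ k ∈ range (t+1), ((k+e).choose e : ℝ) :=
                Finset.sum_le_sum_of_subset_of_nonneg hsub
                  (fun k _ _ => by positivity)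
            _ = ((t+(e+1)).choose (e+1) : ℝ) := by
                rw [← Nat.cast_sum, Nat.sum_range_add_choose]
                norm_cast
      _ = ∑ k ∈ range ((e+1+1)*m+1), ((k+(e+1)).choose (e+1) : ℝ) * lam^k := rfl

/-- Negative binomial tail inequality: for `0 < λ < 1` and positive integers `n, d`,
`∑_{k=0}^{n} C(k+d−1, d−1) λ^k (1−λ)^d ≥ (1 − λ^{n/d})^d`, where `λ^{n/d}` is a real power. -/
theorem negBinomial_tail (lam : ℝ) (hlam0 : 0 < lam) (hlam1 : lam < 1)
    (n d : ℕ) (hn : 0 < n) (hd : 0 < d) :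
    (1 - lam ^ ((n : ℝ) / (d : ℝ))) ^ d ≤
      ∑ k ∈ Finset.range (n + 1),
        ((k + d - 1).choose (d - 1) : ℝ) * lam ^ k * (1 - lam) ^ d := by
  obtain ⟨e, rfl⟩ : ∃ e, d = e + 1 := ⟨d - 1, by omega⟩
  set m := n / (e+1) with hm
  have hdpos : (0:ℝ) < (e+1 : ℕ) := by positivity
  have hmod : (e+1) * m + n % (e+1) = n := Nat.div_add_mod n (e+1)
  have hlt : n < (e+1) * (m+1) := by
    have h1 : n % (e+1) < e+1 := Nat.mod_lt _ (by omega)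
    have h2 : (e+1)*(m+1) = (e+1)*m + (e+1) := by ring
    omega
  -- step 1: λ^{m+1} ≤ λ^{n/(e+1)} so 1 - λ^{n/d} ≤ 1 - λ^{m+1}
  have hexp : (n : ℝ) / ((e+1 : ℕ) : ℝ) ≤ ((m+1 : ℕ) : ℝ) := by
    rw [div_le_iff₀ hdpos]
    have : (n:ℝ) ≤ ((e+1)*(m+1) : ℕ) := by exact_mod_cast hlt.le
    push_cast at this ⊢
    linarith
  have hrpow : lam ^ ((m+1:ℕ):ℝ) ≤ lam ^ ((n : ℝ) / ((e+1:ℕ) : ℝ)) :=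
    Real.rpow_le_rpow_of_exponent_ge hlam0 hlam1.le hexp
  rw [Real.rpow_natCast] at hrpow
  have h1le : 1 - lam ^ ((n : ℝ) / ((e+1:ℕ) : ℝ)) ≤ 1 - lam ^ (m+1) := by linarith
  have hge0 : 0 ≤ 1 - lam ^ ((n : ℝ) / ((e+1:ℕ):ℝ)) := by
    have : lam ^ ((n : ℝ) / ((e+1:ℕ):ℝ)) ≤ 1 :=
      Real.rpow_le_one hlam0.le hlam1.le (by positivity)
    linarith
  have step1 : (1 - lam ^ ((n : ℝ) / ((e+1:ℕ) : ℝ))) ^ (e+1)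
      ≤ (1 - lam ^ (m+1)) ^ (e+1) :=
    pow_le_pow_left₀ hge0 h1le _
  -- step 2: geometric sum identity
  have hgeom : 1 - lam ^ (m+1) = (1 - lam) * ∑ j ∈ range (m+1), lam ^ j := by
    have := geom_sum_mul lam (m+1)
    linarith [this]
  -- step 3: key lemma
  have step3 := key_negbin lam hlam0.le m e
  have h1l : (0:ℝ) ≤ 1 - lam := by linarith
  calc (1 - lam ^ ((n : ℝ) / ((e+1:ℕ) : ℝ))) ^ (e+1)
      ≤ (1 - lam ^ (m+1)) ^ (e+1) := step1
    _ = (1-lam)^(e+1) * (∑ j ∈ range (m+1), lam ^ j) ^ (e+1) := by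
        rw [hgeom, mul_pow]
    _ ≤ (1-lam)^(e+1) * ∑ k ∈ range ((e+1)*m + 1), ((k+e).choose e : ℝ) * lam ^ k :=
        mul_le_mul_of_nonneg_left step3 (pow_nonneg h1l _)
    _ ≤ (1-lam)^(e+1) * ∑ k ∈ range (n + 1), ((k+e).choose e : ℝ) * lam ^ k := by
        apply mul_le_mul_of_nonneg_left _ (pow_nonneg h1l _)
        apply Finset.sum_le_sum_of_subset_of_nonneg
        · apply Finset.range_subset_range.2; omega
        · intro k _ _; positivity
    _ = ∑ k ∈ range (n + 1), ((k + (e+1) - 1).choose ((e+1) - 1) : ℝ) * lam ^ k * (1 - lam) ^ (e+1) := by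
        rw [Finset.mul_sum]
        apply Finset.sum_congr rfl
        intro k _
        have : k + (e+1) - 1 = k + e := by omega
        rw [this, Nat.add_sub_cancel]
        ring
end

section
/- Let (b_k) be a sequence of integers with b_k ≥ 1 for all k ≥ 1, let δ > 0, and let α be real with √δ ≤ |α| ≤ 1/2. Then with m = ⌈1/(2|α|) + 1/δ⌉, one has 2 ∑_{k=1}^∞ b_k e^{−kδ} sin²(π k α) ≥ e^{−(√δ/2 + 1 + δ)} δ^{−1}. -/
open Real

lemma cos_sum_aux (a : ℝ) (ha0 : 0 < a) (ha : a ≤ 1 / 2) (m : ℕ) :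
    ∑ k ∈ Finset.range m, Real.cos (2 * π * ((k : ℝ) + 1) * a) ≤ 1 / (2 * a) := by
  have hπ := Real.pi_pos
  have hsin : 2 * a ≤ Real.sin (π * a) := by
    have := Real.mul_le_sin (x := π * a) (by positivity)
      (by nlinarith)
    calc 2 * a = 2 / π * (π * a) := by field_simp
    _ ≤ Real.sin (π * a) := this
  have hs0 : 0 < Real.sin (π * a) := by nlinarith
  have key : (∑ k ∈ Finset.range m, Real.cos (2 * π * ((k : ℝ) + 1) * a))
      * (2 * Real.sin (π * a))
      = Real.sin ((2 * m + 1) * (π * a)) - Real.sin (π * a) := by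
    rw [Finset.sum_mul]
    have : ∀ k ∈ Finset.range m,
        Real.cos (2 * π * ((k : ℝ) + 1) * a) * (2 * Real.sin (π * a))
        = Real.sin ((2 * (k + 1 : ℕ) + 1) * (π * a))
          - Real.sin ((2 * (k : ℕ) + 1) * (π * a)) := by
      intro k _
      rw [Real.sin_sub_sin]
      push_cast
      ring_nf
    rw [Finset.sum_congr rfl this, Finset.sum_range_sub
      (fun k => Real.sin ((2 * (k : ℕ) + 1) * (π * a)))]
    push_cast
    ring_nf
  have hb : Real.sin ((2 * m + 1) * (π * a)) ≤ 1 := Real.sin_le_one _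
  -- so sum ≤ (1 - sin)/(2 sin) ≤ 1/(2 sin) ≤ 1/(4a) ≤ 1/(2a)
  have h1 : (∑ k ∈ Finset.range m, Real.cos (2 * π * ((k : ℝ) + 1) * a))
      ≤ 1 / (2 * Real.sin (π * a)) := by
    rw [le_div_iff₀ (by positivity)]
    nlinarith [Real.sin_nonneg_of_nonneg_of_le_pi (x := π * a) (by positivity) (by nlinarith)]
  refine h1.trans ?_
  rw [div_le_div_iff₀ (by positivity) (by positivity)]
  nlinarith

/-- For an integer sequence `b_k ≥ 1` (`k ≥ 1`), `δ > 0`, and `√δ ≤ |α| ≤ 1/2`,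
`2 ∑_{k≥1} b_k e^{−kδ} sin²(π k α) ≥ e^{−(√δ/2 + 1 + δ)} δ⁻¹`. -/
theorem khintchine_condition_III (b : ℕ → ℤ) (hb : ∀ k, 1 ≤ k → 1 ≤ b k)
    (δ : ℝ) (hδ : 0 < δ) (α : ℝ) (hα1 : Real.sqrt δ ≤ |α|) (hα2 : |α| ≤ 1 / 2) :
    ENNReal.ofReal (Real.exp (-(Real.sqrt δ / 2 + 1 + δ)) * δ⁻¹) ≤
      2 * ∑' k : ℕ,
        ENNReal.ofReal
          ((b (k + 1) : ℝ) * Real.exp (-((k : ℝ) + 1) * δ) *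
            Real.sin (π * ((k : ℝ) + 1) * α) ^ 2) := by
  set a := |α| with hadef
  have hsq : 0 < Real.sqrt δ := Real.sqrt_pos.2 hδ
  have ha0 : 0 < a := lt_of_lt_of_le hsq hα1
  set m : ℕ := ⌈1 / (2 * a) + 1 / δ⌉₊ with hmdef
  have hm1 : 1 / (2 * a) + 1 / δ ≤ (m : ℝ) := Nat.le_ceil _
  have hm2 : (m : ℝ) ≤ 1 / (2 * a) + 1 / δ + 1 := by
    exact_mod_cast le_of_lt (Nat.ceil_lt_add_one (by positivity))
  -- bound m * δ
  have hsqsq : Real.sqrt δ * Real.sqrt δ = δ := Real.mul_self_sqrt hδ.le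
  have hmδ : (m : ℝ) * δ ≤ Real.sqrt δ / 2 + 1 + δ := by
    have h1 : δ / (2 * a) ≤ Real.sqrt δ / 2 := by
      rw [div_le_div_iff₀ (by positivity) (by norm_num)]
      nlinarith
    have := mul_le_mul_of_nonneg_right hm2 hδ.le
    have h2 : (1 / (2 * a) + 1 / δ + 1) * δ = δ / (2 * a) + 1 + δ := by
      field_simp
    nlinarith
  -- sin squares are even in α
  have hsin_eq : ∀ x : ℝ, Real.sin (x * α) ^ 2 = Real.sin (x * a) ^ 2 := by
    intro x
    rcases abs_choice α with h | h
    · rw [hadef, h]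
    · rw [hadef, h, mul_neg, Real.sin_neg, neg_sq]
  -- key real inequality on the partial sum
  set T : ℝ := ∑ k ∈ Finset.range m,
      ((b (k + 1) : ℝ) * Real.exp (-((k : ℝ) + 1) * δ) *
        Real.sin (π * ((k : ℝ) + 1) * α) ^ 2) with hT
  have hterm_nonneg : ∀ k : ℕ, 0 ≤ (b (k + 1) : ℝ) * Real.exp (-((k : ℝ) + 1) * δ) *
      Real.sin (π * ((k : ℝ) + 1) * α) ^ 2 := by
    intro k
    have hb1 : (1 : ℝ) ≤ (b (k + 1) : ℝ) := by exact_mod_cast hb (k + 1) (Nat.le_add_left 1 k)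
    positivity
  have hTlb : Real.exp (-(Real.sqrt δ / 2 + 1 + δ)) * δ⁻¹ ≤ 2 * T := by
    have hstep : ∀ k ∈ Finset.range m,
        Real.exp (-(m : ℝ) * δ) * Real.sin (π * ((k : ℝ) + 1) * a) ^ 2 ≤
        (b (k + 1) : ℝ) * Real.exp (-((k : ℝ) + 1) * δ) *
          Real.sin (π * ((k : ℝ) + 1) * α) ^ 2 := by
      intro k hk
      rw [hsin_eq (π * ((k : ℝ) + 1))]
      have hb1 : (1 : ℝ) ≤ (b (k + 1) : ℝ) := by exact_mod_cast hb (k + 1) (Nat.le_add_left 1 k)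
      have hk' : (k : ℝ) + 1 ≤ (m : ℝ) := by
        have := Finset.mem_range.1 hk
        exact_mod_cast Nat.succ_le_of_lt this
      have hexp : Real.exp (-(m : ℝ) * δ) ≤ Real.exp (-((k : ℝ) + 1) * δ) :=
        Real.exp_le_exp.2 (by nlinarith)
      have h2 : 0 ≤ Real.sin (π * ((k : ℝ) + 1) * a) ^ 2 := sq_nonneg _
      nlinarith [mul_le_mul_of_nonneg_right hexp h2,
        mul_le_mul_of_nonneg_right hb1 (mul_nonneg (Real.exp_pos (-((k : ℝ) + 1) * δ)).le h2)]
    have hTge : Real.exp (-(m : ℝ) * δ) *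
        (∑ k ∈ Finset.range m, Real.sin (π * ((k : ℝ) + 1) * a) ^ 2) ≤ T := by
      rw [hT, Finset.mul_sum]
      exact Finset.sum_le_sum hstep
    -- sin square sum lower bound
    have hsinsum : (m : ℝ) - 1 / (2 * a) ≤
        2 * ∑ k ∈ Finset.range m, Real.sin (π * ((k : ℝ) + 1) * a) ^ 2 := by
      have heq : ∀ k : ℕ, Real.sin (π * ((k : ℝ) + 1) * a) ^ 2
          = 1 / 2 - Real.cos (2 * π * ((k : ℝ) + 1) * a) / 2 := by
        intro k
        rw [Real.sin_sq, Real.cos_sq]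
        ring_nf
      have : ∑ k ∈ Finset.range m, Real.sin (π * ((k : ℝ) + 1) * a) ^ 2
          = (m : ℝ) / 2 - (∑ k ∈ Finset.range m, Real.cos (2 * π * ((k : ℝ) + 1) * a)) / 2 := by
        simp only [heq, Finset.sum_sub_distrib, Finset.sum_const, Finset.card_range,
          nsmul_eq_mul, ← Finset.sum_div]
        ring
      rw [this]
      have := cos_sum_aux a ha0 hα2 m
      linarith
    have hδbound : 1 / δ ≤ (m : ℝ) - 1 / (2 * a) := by linarith
    have hexpm : Real.exp (-(Real.sqrt δ / 2 + 1 + δ)) ≤ Real.exp (-(m : ℝ) * δ) :=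
      Real.exp_le_exp.2 (by linarith)
    calc Real.exp (-(Real.sqrt δ / 2 + 1 + δ)) * δ⁻¹
        ≤ Real.exp (-(m : ℝ) * δ) * (1 / δ) := by
          rw [one_div]
          exact mul_le_mul_of_nonneg_right hexpm (by positivity)
      _ ≤ Real.exp (-(m : ℝ) * δ) * ((m : ℝ) - 1 / (2 * a)) :=
          mul_le_mul_of_nonneg_left hδbound (Real.exp_pos _).le
      _ ≤ Real.exp (-(m : ℝ) * δ) *
          (2 * ∑ k ∈ Finset.range m, Real.sin (π * ((k : ℝ) + 1) * a) ^ 2) :=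
          mul_le_mul_of_nonneg_left hsinsum (Real.exp_pos _).le
      _ = 2 * (Real.exp (-(m : ℝ) * δ) *
          ∑ k ∈ Finset.range m, Real.sin (π * ((k : ℝ) + 1) * a) ^ 2) := by ring
      _ ≤ 2 * T := by linarith
  -- transfer to ENNReal
  have h1 : ENNReal.ofReal T ≤ ∑' k : ℕ,
      ENNReal.ofReal ((b (k + 1) : ℝ) * Real.exp (-((k : ℝ) + 1) * δ) *
        Real.sin (π * ((k : ℝ) + 1) * α) ^ 2) := by
    rw [hT, ENNReal.ofReal_sum_of_nonneg (fun k _ => hterm_nonneg k)]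
    exact ENNReal.sum_le_tsum _
  calc ENNReal.ofReal (Real.exp (-(Real.sqrt δ / 2 + 1 + δ)) * δ⁻¹)
      ≤ ENNReal.ofReal (2 * T) := ENNReal.ofReal_le_ofReal hTlb
    _ = 2 * ENNReal.ofReal T := by
        rw [ENNReal.ofReal_mul (by norm_num)]
        norm_num
    _ ≤ 2 * _ := by exact mul_le_mul_right h1 2
end

section
/- Fix 0 < λ < 1 and a positive integer d, and let f(λ) = 1 − I_λ(n+1, d)/(1 − (1−λ)^d), where I_λ(a,b) is the regularized incomplete beta function. Then for every integer k ≥ 1, f(λ^k) ≥ f(λ); equivalently, I_{λ^k}(n+1,d)/(1 − (1−λ^k)^d) ≤ I_λ(n+1,d)/(1 − (1−λ)^d). -/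
open intervalIntegral Set

private lemma int_onemt (d : ℕ) (hd : 0 < d) (x : ℝ) :
    (∫ t in (0:ℝ)..x, (1 - t) ^ (d - 1)) = (1 - (1 - x) ^ d) / d := by
  have h := intervalIntegral.integral_comp_sub_left (a := (0:ℝ)) (b := x)
      (fun s => s ^ (d-1)) 1
  rw [h, integral_pow, Nat.sub_add_cancel hd]
  have h3 : (1:ℝ) + ((d-1:ℕ):ℝ) = d := by rw [Nat.cast_sub hd]; push_cast; ring
  rw [show ((d-1:ℕ):ℝ) + 1 = (d:ℝ) by linarith]
  simp

private lemma cont (n d : ℕ) : Continuous (fun t : ℝ => t ^ n * (1 - t) ^ (d - 1)) := by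
  continuity

/-- key inequality : d * B(x) ≤ x^n * (1 - (1-x)^d) for 0 ≤ x ≤ 1 -/
private lemma key (n d : ℕ) (hd : 0 < d) (x : ℝ) (hx0 : 0 ≤ x) (hx1 : x ≤ 1) :
    (d : ℝ) * (∫ t in (0:ℝ)..x, t ^ n * (1 - t) ^ (d - 1)) ≤ x ^ n * (1 - (1 - x) ^ d) := by
  have hmono : (∫ t in (0:ℝ)..x, t ^ n * (1 - t) ^ (d - 1)) ≤
      ∫ t in (0:ℝ)..x, x ^ n * (1 - t) ^ (d - 1) := by
    apply intervalIntegral.integral_mono_on hx0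
    · exact (cont n d).intervalIntegrable 0 x
    · exact (Continuous.mul continuous_const (by continuity)).intervalIntegrable 0 x
    · intro t ht
      rcases ht with ⟨ht0, htx⟩
      have h1 : t ^ n ≤ x ^ n := pow_le_pow_left₀ ht0 htx n
      have h2 : (0:ℝ) ≤ (1 - t) ^ (d - 1) := by
        apply pow_nonneg; linarith [htx.trans hx1]
      nlinarith
  have hc : (∫ t in (0:ℝ)..x, x ^ n * (1 - t) ^ (d - 1)) = x ^ n * ((1 - (1-x)^d) / d) := by
    rw [intervalIntegral.integral_const_mul, int_onemt d hd]
  have hdpos : (0:ℝ) < d := by exact_mod_cast hd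
  rw [hc] at hmono
  calc (d:ℝ) * (∫ t in (0:ℝ)..x, t ^ n * (1 - t) ^ (d - 1))
      ≤ (d:ℝ) * (x ^ n * ((1 - (1-x)^d) / d)) := by
        exact mul_le_mul_of_nonneg_left hmono hdpos.le
    _ = x ^ n * (1 - (1-x)^d) := by field_simp

private lemma hmono (n d : ℕ) (hd : 0 < d) :
    MonotoneOn (fun x : ℝ =>
      (∫ t in (0:ℝ)..x, t ^ n * (1 - t) ^ (d - 1)) / (1 - (1 - x) ^ d)) (Ioo (0:ℝ) 1) := by
  set B : ℝ → ℝ := fun x => ∫ t in (0:ℝ)..x, t ^ n * (1 - t) ^ (d - 1) with hB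
  set D : ℝ → ℝ := fun x => 1 - (1 - x) ^ d with hD
  have hderivall : ∀ x ∈ Ioo (0:ℝ) 1, HasDerivAt (fun y => B y / D y)
      ((x ^ n * (1 - x) ^ (d-1) * D x - B x * ((d:ℝ) * (1-x)^(d-1))) / (D x)^2) x := by
    intro x hx
    obtain ⟨hx0, hx1⟩ := hx
    have hBx : HasDerivAt B (x ^ n * (1 - x) ^ (d-1)) x := by
      exact intervalIntegral.integral_hasDerivAt_right
        ((cont n d).intervalIntegrable 0 x)
        ((cont n d).stronglyMeasurableAtFilter _ _)
        (cont n d).continuousAt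
    have hDx : HasDerivAt D ((d:ℝ) * (1-x)^(d-1)) x := by
      have h1 : HasDerivAt (fun y : ℝ => 1 - y) (-1) x := by
        simpa using (hasDerivAt_id x).const_sub 1
      have h2 : HasDerivAt (fun y : ℝ => (1 - y) ^ d) ((d:ℝ) * (1-x)^(d-1) * (-1)) x :=
        h1.pow d
      have h3 := h2.const_sub 1
      exact h3.congr_deriv (by ring)
    have hDne : D x ≠ 0 := by
      have : (1 - x) ^ d < 1 := by
        apply pow_lt_one₀ (by linarith) (by linarith) hd.ne'
      simp only [hD]
      intro h; nlinarith
    exact hBx.div hDx hDne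
  apply monotoneOn_of_deriv_nonneg (convex_Ioo 0 1)
  · exact fun x hx => ((hderivall x hx).differentiableAt).continuousAt.continuousWithinAt
  · intro x hx
    rw [interior_Ioo] at hx
    exact ((hderivall x hx).differentiableAt).differentiableWithinAt
  · intro x hx
    rw [interior_Ioo] at hx
    rw [(hderivall x hx).deriv]
    obtain ⟨hx0, hx1⟩ := hx
    apply div_nonneg _ (sq_nonneg _)
    have hkey := key n d hd x hx0.le hx1.le
    have h1x : (0:ℝ) ≤ (1-x)^(d-1) := pow_nonneg (by linarith) _
    have : B x * ((d:ℝ) * (1-x)^(d-1)) ≤ x ^ n * (1 - x) ^ (d-1) * D x := by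
      have : (d:ℝ) * B x ≤ x ^ n * D x := hkey
      nlinarith
    linarith

/-- The regularized incomplete beta function `I_x(a, b)` for positive integer parameters:
`I_x(a,b) = ∫_0^x t^{a−1}(1−t)^{b−1} dt / ∫_0^1 t^{a−1}(1−t)^{b−1} dt`. -/
noncomputable def regIncBeta (x : ℝ) (a b : ℕ) : ℝ :=
  (∫ t in (0 : ℝ)..x, t ^ (a - 1) * (1 - t) ^ (b - 1)) /
    (∫ t in (0 : ℝ)..1, t ^ (a - 1) * (1 - t) ^ (b - 1))

/-- For `0 < λ < 1`, `d ≥ 1`, and `f(x) = 1 − I_x(n+1, d)/(1 − (1−x)^d)`, one has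
`f(λ^k) ≥ f(λ)` for every integer `k ≥ 1`; equivalently
`I_{λ^k}(n+1,d)/(1 − (1−λ^k)^d) ≤ I_λ(n+1,d)/(1 − (1−λ)^d)`. -/
theorem truncated_negBinomial_monotone (lam : ℝ) (h0 : 0 < lam) (h1 : lam < 1)
    (d : ℕ) (hd : 0 < d) (n : ℕ) (k : ℕ) (hk : 1 ≤ k) :
    (1 - regIncBeta lam (n + 1) d / (1 - (1 - lam) ^ d)) ≤
      (1 - regIncBeta (lam ^ k) (n + 1) d / (1 - (1 - lam ^ k) ^ d)) ∧
    regIncBeta (lam ^ k) (n + 1) d / (1 - (1 - lam ^ k) ^ d) ≤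
      regIncBeta lam (n + 1) d / (1 - (1 - lam) ^ d) := by
  have hc : (0:ℝ) < ∫ t in (0:ℝ)..1, t ^ n * (1 - t) ^ (d - 1) := by
    apply intervalIntegral.intervalIntegral_pos_of_pos_on
      ((cont n d).intervalIntegrable 0 1)
    · intro t ht
      obtain ⟨ht0, ht1⟩ := ht
      exact mul_pos (pow_pos ht0 n) (pow_pos (by linarith) _)
    · norm_num
  have hmem1 : lam ∈ Ioo (0:ℝ) 1 := ⟨h0, h1⟩
  have hmem2 : lam ^ k ∈ Ioo (0:ℝ) 1 := ⟨pow_pos h0 k, pow_lt_one₀ h0.le h1 (by omega)⟩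
  have hle : lam ^ k ≤ lam := pow_le_of_le_one h0.le h1.le (by omega)
  have hmain := hmono n d hd hmem2 hmem1 hle
  simp only at hmain
  have h2 : regIncBeta (lam ^ k) (n + 1) d / (1 - (1 - lam ^ k) ^ d) ≤
      regIncBeta lam (n + 1) d / (1 - (1 - lam) ^ d) := by
    unfold regIncBeta
    rw [Nat.add_sub_cancel]
    rw [div_right_comm, div_right_comm _ _ ((1:ℝ) - (1-lam)^d)]
    gcongr
  exact ⟨by linarith, h2⟩
end
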